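/- Let K be a suitable convolution kernel on ℝ^d, let E ⊆ Ω ⊆ ℝ^d be measurable sets with P_K(E) < ∞. Then the following are equivalent: (i) for every measurable F ⊆ Ω one has P_K(E) ≤ P_K(E ∪ F); (ii) for every measurable G ⊆ Ω one has P_K(E ∩ G) ≤ P_K(G). -/

import Mathlib

open MeasureTheory
open scoped ENNReal

/-- The convolution of a kernel `K` with the indicator function of a set `E`. -/
noncomputable def conv {d : ℕ} (K : EuclideanSpace ℝ (Fin d) → ℝ)
    (E : Set (EuclideanSpace ℝ (Fin d))) (x : EuclideanSpace ℝ (Fin d)) : ℝ :=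
  ∫ y, K (x - y) * E.indicator (fun _ => (1 : ℝ)) y

/-- The `K`-perimeter `P_K(D) = ∫_{Dᶜ} K ∗ χ_D`, as a value in `[0,∞]`. -/
noncomputable def PK {d : ℕ} (K : EuclideanSpace ℝ (Fin d) → ℝ)
    (D : Set (EuclideanSpace ℝ (Fin d))) : ℝ≥0∞ :=
  ∫⁻ x in Dᶜ, ENNReal.ofReal (conv K D x)

/-- Auxiliary: the `ℝ≥0∞`-valued convolution. -/
noncomputable def convE {d : ℕ} (K : EuclideanSpace ℝ (Fin d) → ℝ)
    (D : Set (EuclideanSpace ℝ (Fin d))) (x : EuclideanSpace ℝ (Fin d)) : ℝ≥0∞ :=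
  ∫⁻ y, ENNReal.ofReal (K (x - y)) * D.indicator 1 y

lemma ofReal_conv_eq {d : ℕ} (K : EuclideanSpace ℝ (Fin d) → ℝ)
    (hK0 : ∀ x, 0 ≤ K x) (hKint : Integrable K)
    (D : Set (EuclideanSpace ℝ (Fin d))) (hD : MeasurableSet D)
    (x : EuclideanSpace ℝ (Fin d)) :
    ENNReal.ofReal (conv K D x) = convE K D x := by
  have hf : Integrable (fun y => K (x - y)) := hKint.comp_sub_left x
  have heq : (fun y => K (x - y) * D.indicator (fun _ => (1 : ℝ)) y)
      = D.indicator (fun y => K (x - y)) := by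
    funext y
    by_cases hy : y ∈ D <;> simp [hy]
  have hint : Integrable (fun y => K (x - y) * D.indicator (fun _ => (1 : ℝ)) y) := by
    rw [heq]; exact hf.indicator hD
  have hnn : 0 ≤ᵐ[volume] fun y => K (x - y) * D.indicator (fun _ => (1 : ℝ)) y := by
    filter_upwards with y
    exact mul_nonneg (hK0 _) (Set.indicator_nonneg (fun _ _ => zero_le_one) y)
  rw [conv, MeasureTheory.ofReal_integral_eq_lintegral_ofReal hint hnn]
  refine lintegral_congr fun y => ?_
  by_cases hy : y ∈ D <;>
    simp [hy, ENNReal.ofReal_mul (hK0 (x - y))]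

lemma PK_eq {d : ℕ} (K : EuclideanSpace ℝ (Fin d) → ℝ)
    (hK0 : ∀ x, 0 ≤ K x) (hKint : Integrable K)
    (D : Set (EuclideanSpace ℝ (Fin d))) (hD : MeasurableSet D) :
    PK K D = ∫⁻ x, Dᶜ.indicator (convE K D) x := by
  rw [PK, lintegral_indicator hD.compl]
  exact lintegral_congr fun x => ofReal_conv_eq K hK0 hKint D hD x

lemma convE_congr_kernel {d : ℕ} {K K' : EuclideanSpace ℝ (Fin d) → ℝ}
    (hae : K =ᵐ[volume] K') (D : Set (EuclideanSpace ℝ (Fin d)))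
    (x : EuclideanSpace ℝ (Fin d)) : convE K D x = convE K' D x := by
  refine lintegral_congr_ae ?_
  have hmp : MeasurePreserving (fun y => x - y)
      (volume : Measure (EuclideanSpace ℝ (Fin d))) volume :=
    Measure.measurePreserving_sub_left volume x
  have h : (fun y => K (x - y)) =ᵐ[volume] fun y => K' (x - y) := by
    exact MeasureTheory.ae_eq_comp (f := fun y => x - y)
      hmp.measurable.aemeasurable (by rw [hmp.map_eq]; exact hae)
  filter_upwards [h] with y hy
  rw [hy]

lemma convE_mono {d : ℕ} (K : EuclideanSpace ℝ (Fin d) → ℝ)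
    {A B : Set (EuclideanSpace ℝ (Fin d))} (hAB : A ⊆ B)
    (x : EuclideanSpace ℝ (Fin d)) : convE K A x ≤ convE K B x := by
  refine lintegral_mono fun y => ?_
  exact mul_le_mul_right (Set.indicator_le_indicator_of_subset hAB (fun _ => zero_le) y) _

/-- Submodularity of the nonlocal perimeter. -/
lemma PK_submodular {d : ℕ} (K : EuclideanSpace ℝ (Fin d) → ℝ)
    (hK0 : ∀ x, 0 ≤ K x) (hKint : Integrable K)
    {A B : Set (EuclideanSpace ℝ (Fin d))}
    (hA : MeasurableSet A) (hB : MeasurableSet B) :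
    PK K (A ∩ B) + PK K (A ∪ B) ≤ PK K A + PK K B := by
  -- replace K by a measurable representative for measurability purposes
  obtain ⟨K', hK'sm, hae⟩ : ∃ K', StronglyMeasurable K' ∧ K =ᵐ[volume] K' :=
    ⟨hKint.1.mk K, hKint.1.stronglyMeasurable_mk, hKint.1.ae_eq_mk⟩
  have hK'meas : Measurable K' := hK'sm.measurable
  -- measurability of convE
  have hconv_meas : ∀ (D : Set (EuclideanSpace ℝ (Fin d))), MeasurableSet D →
      Measurable (convE K D) := by
    intro D hD
    have : convE K D = fun x => ∫⁻ y, ENNReal.ofReal (K' (x - y)) * D.indicator 1 y := by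
      funext x; exact convE_congr_kernel hae D x
    rw [this]
    exact Measurable.lintegral_prod_right'
      (f := fun p : (EuclideanSpace ℝ (Fin d)) × (EuclideanSpace ℝ (Fin d)) =>
        ENNReal.ofReal (K' (p.1 - p.2)) * D.indicator 1 p.2)
      ((ENNReal.measurable_ofReal.comp (hK'meas.comp (measurable_fst.sub measurable_snd))).mul
        ((measurable_one.indicator hD).comp measurable_snd))
  -- modularity of convE
  have hmod : ∀ x, convE K (A ∩ B) x + convE K (A ∪ B) x = convE K A x + convE K B x := by
    intro x
    rw [convE_congr_kernel hae, convE_congr_kernel hae, convE_congr_kernel hae,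
      convE_congr_kernel hae]
    unfold convE
    have hm : ∀ (D : Set (EuclideanSpace ℝ (Fin d))), MeasurableSet D →
        Measurable (fun y => ENNReal.ofReal (K' (x - y)) * D.indicator 1 y) := fun D hD =>
      (ENNReal.measurable_ofReal.comp (hK'meas.comp (measurable_const.sub measurable_id))).mul
        (measurable_one.indicator hD)
    rw [← lintegral_add_left (hm _ (hA.inter hB)), ← lintegral_add_left (hm _ hA)]
    refine lintegral_congr fun y => ?_
    rw [← mul_add, ← mul_add]
    congr 1
    by_cases hyA : y ∈ A <;> by_cases hyB : y ∈ B <;>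
      simp [hyA, hyB, Set.indicator_of_mem, Set.indicator_of_notMem]
  -- rewrite the perimeters
  rw [PK_eq K hK0 hKint _ (hA.inter hB), PK_eq K hK0 hKint _ (hA.union hB),
    PK_eq K hK0 hKint _ hA, PK_eq K hK0 hKint _ hB]
  rw [← lintegral_add_left ((hconv_meas _ (hA.inter hB)).indicator (hA.inter hB).compl),
    ← lintegral_add_left ((hconv_meas _ hA).indicator hA.compl)]
  refine lintegral_mono fun x => ?_
  by_cases hxA : x ∈ A <;> by_cases hxB : x ∈ B
  · have h1 : x ∉ (A ∩ B)ᶜ := fun hc => hc ⟨hxA, hxB⟩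
    have h2 : x ∉ (A ∪ B)ᶜ := fun hc => hc (Or.inl hxA)
    rw [Set.indicator_of_notMem h1, Set.indicator_of_notMem h2]
    simp
  · have h1 : x ∈ (A ∩ B)ᶜ := fun hc => hxB hc.2
    have h2 : x ∉ (A ∪ B)ᶜ := fun hc => hc (Or.inl hxA)
    have h3 : x ∉ Aᶜ := fun hc => hc hxA
    have h4 : x ∈ Bᶜ := hxB
    rw [Set.indicator_of_mem h1, Set.indicator_of_notMem h2,
      Set.indicator_of_notMem h3, Set.indicator_of_mem h4, add_zero, zero_add]
    exact convE_mono K Set.inter_subset_right x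
  · have h1 : x ∈ (A ∩ B)ᶜ := fun hc => hxA hc.1
    have h2 : x ∉ (A ∪ B)ᶜ := fun hc => hc (Or.inr hxB)
    have h3 : x ∈ Aᶜ := hxA
    have h4 : x ∉ Bᶜ := fun hc => hc hxB
    rw [Set.indicator_of_mem h1, Set.indicator_of_notMem h2,
      Set.indicator_of_mem h3, Set.indicator_of_notMem h4, add_zero, add_zero]
    exact convE_mono K Set.inter_subset_left x
  · have h1 : x ∈ (A ∩ B)ᶜ := fun hc => hxA hc.1
    have h2 : x ∈ (A ∪ B)ᶜ := fun hc => hc.elim hxA hxB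
    have h3 : x ∈ Aᶜ := hxA
    have h4 : x ∈ Bᶜ := hxB
    rw [Set.indicator_of_mem h1, Set.indicator_of_mem h2,
      Set.indicator_of_mem h3, Set.indicator_of_mem h4]
    exact le_of_eq (hmod x)

/-- Equivalent formulations of the `K`-outward minimizing condition:
    `P_K(E) ≤ P_K(E ∪ F)` for all measurable `F ⊆ Ω` iff
    `P_K(E ∩ G) ≤ P_K(G)` for all measurable `G ⊆ Ω`. -/
theorem outward_minimizing_iff
    {d : ℕ} (K : EuclideanSpace ℝ (Fin d) → ℝ)
    (hK0 : ∀ x, 0 ≤ K x) (hKeven : ∀ x, K (-x) = K x)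
    (hKint : Integrable K) (hK1 : ∫ x, K x = 1)
    (E Ω : Set (EuclideanSpace ℝ (Fin d)))
    (hE : MeasurableSet E) (hΩ : MeasurableSet Ω) (hEΩ : E ⊆ Ω)
    (hPE : PK K E < ⊤) :
    (∀ F : Set (EuclideanSpace ℝ (Fin d)), MeasurableSet F → F ⊆ Ω →
        PK K E ≤ PK K (E ∪ F)) ↔
    (∀ G : Set (EuclideanSpace ℝ (Fin d)), MeasurableSet G → G ⊆ Ω →
        PK K (E ∩ G) ≤ PK K G) := by
  constructor
  · intro hi G hG hGΩ
    have h1 : PK K E ≤ PK K (E ∪ G) := hi G hG hGΩ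
    have h2 : PK K (E ∩ G) + PK K (E ∪ G) ≤ PK K E + PK K G :=
      PK_submodular K hK0 hKint hE hG
    have h3 : PK K (E ∩ G) + PK K E ≤ PK K G + PK K E := by
      calc PK K (E ∩ G) + PK K E ≤ PK K (E ∩ G) + PK K (E ∪ G) := add_le_add_right h1 _
        _ ≤ PK K E + PK K G := h2
        _ = PK K G + PK K E := add_comm _ _
    exact (ENNReal.add_le_add_iff_right hPE.ne).mp h3
  · intro hii F hF hFΩ
    have h := hii (E ∪ F) (hE.union hF) (Set.union_subset hEΩ hFΩ)
    rwa [Set.inter_eq_self_of_subset_left Set.subset_union_left] at h
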